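/- The operator-splitting scheme μ^k_{t} (alternating half-steps μ ↦ μ + Δt·h[μ] for the source and push-forward by the flow of V[μ] for the transport, with Δt = T/2^k) preserves probability: if μ₀ ∈ P(ℝ^d) and 2^k ≥ S̄·T, then μ^k_t ∈ P(ℝ^d) for all t ∈ [0,T]. -/

import Mathlib

open MeasureTheory
open scoped NNReal

/-- Integral of a scalar function against a finite signed measure. -/
noncomputable def sIntR {d : ℕ} (μ : SignedMeasure (EuclideanSpace ℝ (Fin d)))
    (f : EuclideanSpace ℝ (Fin d) → ℝ) : ℝ :=
  (∫ y, f y ∂μ.toJordanDecomposition.posPart) -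
    (∫ y, f y ∂μ.toJordanDecomposition.negPart)

/-- Iterated integral against a signed measure. -/
noncomputable def iterInt {d : ℕ} (μ : SignedMeasure (EuclideanSpace ℝ (Fin d))) :
    (q : ℕ) → ((Fin q → EuclideanSpace ℝ (Fin d)) → ℝ) → ℝ
  | 0, F => F Fin.elim0
  | (q + 1), F => sIntR μ (fun y => iterInt μ q (fun ys => F (Fin.cons y ys)))

/-- The non-local vector field `V[μ](x) = ∫ φ(x - y) dμ(y)`. -/
noncomputable def Vfield {d : ℕ} (φ : EuclideanSpace ℝ (Fin d) → EuclideanSpace ℝ (Fin d))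
    (μ : SignedMeasure (EuclideanSpace ℝ (Fin d))) (x : EuclideanSpace ℝ (Fin d)) :
    EuclideanSpace ℝ (Fin d) :=
  (∫ y, φ (x - y) ∂μ.toJordanDecomposition.posPart) -
    (∫ y, φ (x - y) ∂μ.toJordanDecomposition.negPart)

/-- Value on a set `A` of the source term `h[ν]`, the signed measure with density
`x ↦ ∫⋯∫ S(x,y₁,…,y_q) dν^{⊗q}` with respect to `ν`. -/
noncomputable def srcVal {d q : ℕ} (S : (Fin (q + 1) → EuclideanSpace ℝ (Fin d)) → ℝ)
    (ν : SignedMeasure (EuclideanSpace ℝ (Fin d))) (A : Set (EuclideanSpace ℝ (Fin d))) : ℝ :=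
  (∫ x in A, iterInt ν q (fun ys => S (Fin.cons x ys)) ∂ν.toJordanDecomposition.posPart) -
    (∫ x in A, iterInt ν q (fun ys => S (Fin.cons x ys)) ∂ν.toJordanDecomposition.negPart)

/-- The operator-splitting scheme `𝕊` with time step `Δt = T/2^k`: on each interval
`[nΔt, (n+½)Δt]` a source half-step `μ_t = μ_{nΔt} + 2(t-nΔt) h[μ_{nΔt}]`, and on
`[(n+½)Δt, (n+1)Δt]` a transport half-step by the flow of the frozen vector field
`V[μ_{nΔt}]`. -/
def IsScheme {d q : ℕ} (φ : EuclideanSpace ℝ (Fin d) → EuclideanSpace ℝ (Fin d))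
    (S : (Fin (q + 1) → EuclideanSpace ℝ (Fin d)) → ℝ) (T : ℝ) (k : ℕ)
    (μ : ℝ → SignedMeasure (EuclideanSpace ℝ (Fin d))) : Prop :=
  ∀ n : ℕ, n < 2 ^ k →
    (∃ H : SignedMeasure (EuclideanSpace ℝ (Fin d)),
      (∀ A, MeasurableSet A → H A = srcVal S (μ (n * (T / 2 ^ k))) A) ∧
      ∀ t ∈ Set.Ioc ((n : ℝ) * (T / 2 ^ k)) (((n : ℝ) + 1 / 2) * (T / 2 ^ k)),
        μ t = μ ((n : ℝ) * (T / 2 ^ k)) + (2 * (t - (n : ℝ) * (T / 2 ^ k))) • H) ∧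
    (∃ Φ : ℝ → EuclideanSpace ℝ (Fin d) → EuclideanSpace ℝ (Fin d),
      (∀ x, Φ 0 x = x) ∧
      (∀ x s, HasDerivAt (fun u => Φ u x)
        (Vfield φ (μ ((n : ℝ) * (T / 2 ^ k))) (Φ s x)) s) ∧
      (∀ s, Measurable (Φ s)) ∧
      ∀ t ∈ Set.Ioc (((n : ℝ) + 1 / 2) * (T / 2 ^ k)) (((n : ℝ) + 1) * (T / 2 ^ k)),
        μ t = VectorMeasure.map (μ (((n : ℝ) + 1 / 2) * (T / 2 ^ k)))
          (Φ (2 * (t - ((n : ℝ) + 1 / 2) * (T / 2 ^ k)))))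

section Aux

variable {d : ℕ}

local notation "E" => EuclideanSpace ℝ (Fin d)

lemma continuous_finCons (q : ℕ) :
    Continuous (fun p : E × (Fin q → E) => Fin.cons p.1 p.2 : _ → Fin (q+1) → E) := by
  apply continuous_pi
  intro i
  refine Fin.cases ?_ ?_ i
  · simpa using continuous_fst
  · intro j; simpa using (by fun_prop : Continuous fun p : E × (Fin q → E) => p.2 j)

lemma integrable_of_bdd {α : Type*} [MeasurableSpace α] {μ : Measure α} [IsFiniteMeasure μ]
    {f : α → ℝ} (hf : AEStronglyMeasurable f μ) {C : ℝ} (h : ∀ x, |f x| ≤ C) :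
    Integrable f μ :=
  Integrable.mono' (integrable_const C) hf
    (Filter.Eventually.of_forall (by simpa [Real.norm_eq_abs] using h))

lemma jordan_of_prob {ν : SignedMeasure E} (h : ∀ A, MeasurableSet A → 0 ≤ ν A)
    (hm : ν Set.univ = 1) :
    ∃ P : Measure E, IsProbabilityMeasure P ∧ ν.toJordanDecomposition.posPart = P ∧
      ν.toJordanDecomposition.negPart = 0 ∧ ∀ A, MeasurableSet A → (P A).toReal = ν A := by
  have hle : (0 : SignedMeasure E) ≤[Set.univ] ν := by
    refine (VectorMeasure.restrict_le_restrict_iff _ _ MeasurableSet.univ).2 ?_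
    intro j hj _
    simpa using h j hj
  set P := ν.toMeasureOfZeroLE Set.univ MeasurableSet.univ hle with hP
  have happ : ∀ A, MeasurableSet A → (P A).toReal = ν A := by
    intro A hA
    rw [hP, SignedMeasure.toMeasureOfZeroLE_apply ν hle MeasurableSet.univ hA]
    simp [Set.univ_inter]
  have hfin : IsFiniteMeasure P := by infer_instance
  set j : JordanDecomposition E :=
    @JordanDecomposition.mk _ _ P 0 hfin inferInstance (Measure.MutuallySingular.zero_right)
    with hj
  have hsig : ν = j.toSignedMeasure := by
    rw [hj]
    show ν = P.toSignedMeasure - (0 : Measure E).toSignedMeasure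
    rw [Measure.toSignedMeasure_zero, sub_zero]
    exact (SignedMeasure.toMeasureOfZeroLE_toSignedMeasure ν hle).symm
  have hJ := SignedMeasure.toJordanDecomposition_eq hsig
  have hprob : IsProbabilityMeasure P := by
    constructor
    rw [← ENNReal.toReal_eq_one_iff]
    rw [happ Set.univ MeasurableSet.univ, hm]
  exact ⟨P, hprob, by rw [hJ], by rw [hJ], happ⟩

lemma iterInt_eq {ν : SignedMeasure E} {P : Measure E} [IsProbabilityMeasure P]
    (hpos : ν.toJordanDecomposition.posPart = P)
    (hneg : ν.toJordanDecomposition.negPart = 0) {C : ℝ} :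
    ∀ (q : ℕ) (F : (Fin q → E) → ℝ), Continuous F → (∀ y, |F y| ≤ C) →
      iterInt ν q F = ∫ y, F y ∂(Measure.pi fun _ : Fin q => P)
  | 0, F, hF, hC => by
      rw [Measure.pi_of_empty, integral_dirac' _ _ hF.stronglyMeasurable]
      exact congrArg F (Subsingleton.elim _ _)
  | (q+1), F, hF, hC => by
      show sIntR ν (fun y => iterInt ν q (fun ys => F (Fin.cons y ys))) = _
      have hconsy : ∀ y : E,
          Continuous (fun ys : Fin q → E => Fin.cons y ys : _ → Fin (q+1) → E) :=
        fun y => (continuous_finCons q).comp (Continuous.prodMk_right y)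
      have hinner : ∀ y, iterInt ν q (fun ys => F (Fin.cons y ys)) =
          ∫ ys, F (Fin.cons y ys) ∂(Measure.pi fun _ : Fin q => P) := fun y =>
        iterInt_eq hpos hneg q _ (hF.comp (hconsy y)) (fun ys => hC _)
      rw [sIntR, hpos, hneg]
      rw [integral_zero_measure, sub_zero]
      calc ∫ y, iterInt ν q (fun ys => F (Fin.cons y ys)) ∂P
          = ∫ y, ∫ ys, F (Fin.cons y ys) ∂(Measure.pi fun _ : Fin q => P) ∂P := by
            simp_rw [hinner]
        _ = ∫ z : E × (Fin q → E), F (Fin.cons z.1 z.2)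
              ∂(P.prod (Measure.pi fun _ : Fin q => P)) := by
            exact (integral_integral (integrable_of_bdd
              ((hF.comp (continuous_finCons q)).aestronglyMeasurable)
              (fun z => hC _)))
        _ = ∫ x, F x ∂(Measure.pi fun _ : Fin (q+1) => P) := by
            have h := (measurePreserving_piFinSuccAbove (fun _ : Fin (q+1) => P) 0).integral_comp'
              (fun z => F (Fin.cons z.1 z.2))
            rw [← h]
            congr 1; funext x
            congr 1
            funext b
            refine Fin.cases ?_ ?_ b
            · simp [MeasurableEquiv.piFinSuccAbove]
            · intro j
              simp [MeasurableEquiv.piFinSuccAbove, Fin.removeNth, Fin.zero_succAbove,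
                Fin.tail]

lemma skew_zero {P : Measure E} [IsProbabilityMeasure P] {q : ℕ}
    {S : (Fin (q+1) → E) → ℝ} {i j : Fin (q+1)}
    (hskew : ∀ y, S y = - S (fun m => y (Equiv.swap i j m))) :
    ∫ y, S y ∂(Measure.pi fun _ : Fin (q+1) => P) = 0 := by
  set e := MeasurableEquiv.piCongrLeft (fun _ : Fin (q+1) => E) (Equiv.swap i j) with he
  have mp := measurePreserving_piCongrLeft (fun _ : Fin (q+1) => P) (Equiv.swap i j)
  have h1 : ∫ x, S (e x) ∂(Measure.pi fun _ : Fin (q+1) => P)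
      = ∫ y, S y ∂(Measure.pi fun _ : Fin (q+1) => P) := mp.integral_comp' S
  have h2 : ∀ x, S (e x) = - S x := by
    intro x
    have hex : e x = fun b => x (Equiv.swap i j b) := by
      funext b
      have := Equiv.piCongrLeft_apply_apply (fun _ : Fin (q+1) => E) (Equiv.swap i j) x
        (Equiv.swap i j b)
      simpa [he, MeasurableEquiv.piCongrLeft, Equiv.swap_apply_self] using this
    rw [hex]
    have := hskew (fun b => x (Equiv.swap i j b))
    simp only [Equiv.swap_apply_self] at this
    rw [this]
  simp_rw [h2, integral_neg] at h1
  linarith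

def IsProb (ν : SignedMeasure E) : Prop :=
  (∀ A, MeasurableSet A → 0 ≤ ν A) ∧ ν Set.univ = 1

lemma source_step {q : ℕ} {S : (Fin (q+1) → E) → ℝ} {Sbar : ℝ}
    (hScont : Continuous S) (hSbdd : ∀ y, |S y| ≤ Sbar)
    (hSskew : ∃ i j : Fin (q+1), i ≠ j ∧ ∀ y, S y = - S (fun m => y (Equiv.swap i j m)))
    {ν H : SignedMeasure E} (hν : IsProb ν)
    (hH : ∀ A, MeasurableSet A → H A = srcVal S ν A)
    {c : ℝ} (hc0 : 0 ≤ c) (hc1 : c * Sbar ≤ 1) :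
    IsProb (ν + c • H) := by
  obtain ⟨P, hPprob, hpos, hneg, happ⟩ := jordan_of_prob hν.1 hν.2
  set π : Measure (Fin q → E) := Measure.pi fun _ : Fin q => P with hπ
  have hconsx : ∀ x : E, Continuous (fun ys : Fin q → E => S (Fin.cons x ys)) :=
    fun x => hScont.comp ((continuous_finCons q).comp (Continuous.prodMk_right x))
  have hg : ∀ x : E, iterInt ν q (fun ys => S (Fin.cons x ys)) =
      ∫ ys, S (Fin.cons x ys) ∂π := fun x =>
    iterInt_eq hpos hneg q _ (hconsx x) (fun ys => hSbdd _)
  have hgc : Continuous (fun x : E => iterInt ν q (fun ys => S (Fin.cons x ys))) := by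
    rw [show (fun x : E => iterInt ν q (fun ys => S (Fin.cons x ys)))
        = fun x => ∫ ys, S (Fin.cons x ys) ∂π from funext hg]
    apply continuous_of_dominated (bound := fun _ => Sbar)
    · intro x; exact (hconsx x).aestronglyMeasurable
    · intro x
      exact Filter.Eventually.of_forall fun ys => by
        simpa [Real.norm_eq_abs] using hSbdd (Fin.cons x ys)
    · exact integrable_const Sbar
    · exact Filter.Eventually.of_forall fun ys =>
        hScont.comp ((continuous_finCons q).comp (continuous_id.prodMk continuous_const))
  have hgb : ∀ x : E, |iterInt ν q (fun ys => S (Fin.cons x ys))| ≤ Sbar := by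
    intro x
    rw [hg x, ← Real.norm_eq_abs]
    have hb := norm_integral_le_of_norm_le_const (μ := π)
      (f := fun ys => S (Fin.cons x ys)) (C := Sbar)
      (Filter.Eventually.of_forall fun ys => by
        rw [Real.norm_eq_abs]; exact hSbdd _)
    simpa using hb
  have hsrc : ∀ A, MeasurableSet A →
      H A = ∫ x in A, iterInt ν q (fun ys => S (Fin.cons x ys)) ∂P := by
    intro A hA
    rw [hH A hA]
    unfold srcVal
    rw [hpos, hneg]
    simp
  have hHuniv : H Set.univ = 0 := by
    rw [hsrc _ MeasurableSet.univ, setIntegral_univ]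
    have h1 : (∫ x, iterInt ν q (fun ys => S (Fin.cons x ys)) ∂P)
        = iterInt ν (q+1) S := by
      show _ = sIntR ν (fun y => iterInt ν q fun ys => S (Fin.cons y ys))
      rw [sIntR, hpos, hneg, integral_zero_measure, sub_zero]
    rw [h1, iterInt_eq hpos hneg (q+1) S hScont hSbdd]
    obtain ⟨i, j, hij, hsw⟩ := hSskew
    exact skew_zero hsw
  have hSbar0 : 0 ≤ Sbar := le_trans (abs_nonneg _) (hSbdd (fun _ => 0))
  have hHb : ∀ A, MeasurableSet A → |H A| ≤ Sbar * ν A := by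
    intro A hA
    rw [hsrc A hA, ← happ A hA, ← Real.norm_eq_abs]
    exact norm_setIntegral_le_of_norm_le_const (measure_lt_top P A)
      (fun x _ => by rw [Real.norm_eq_abs]; exact hgb x)
  constructor
  · intro A hA
    have h1 : -(Sbar * ν A) ≤ H A := (abs_le.1 (hHb A hA)).1
    have h2 : c * -(Sbar * ν A) ≤ c * H A := mul_le_mul_of_nonneg_left h1 hc0
    have h3 : 0 ≤ ν A := hν.1 A hA
    have h4 : 0 ≤ (1 - c * Sbar) * ν A := mul_nonneg (by linarith) h3
    rw [VectorMeasure.add_apply, VectorMeasure.smul_apply]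
    simp only [smul_eq_mul]
    nlinarith
  · rw [VectorMeasure.add_apply, VectorMeasure.smul_apply, hν.2, hHuniv]
    simp

lemma map_step {ν : SignedMeasure E} (hν : IsProb ν) {f : E → E} (hf : Measurable f) :
    IsProb (VectorMeasure.map ν f) := by
  constructor
  · intro A hA
    rw [VectorMeasure.map_apply ν hf hA]
    exact hν.1 _ (hf hA)
  · rw [VectorMeasure.map_apply ν hf MeasurableSet.univ, Set.preimage_univ, hν.2]

end Aux

/-- the operator-splitting scheme preserves probability: if `μ₀` is a
probability measure and `2^k ≥ S̄ T`, then `μ^k_t` is a probability measure for all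
`t ∈ [0,T]`. -/
theorem scheme_preserves_probability {d q : ℕ} (T : ℝ) (hT : 0 < T)
    (φ : EuclideanSpace ℝ (Fin d) → EuclideanSpace ℝ (Fin d)) (Lφ : ℝ≥0)
    (hφ : LipschitzWith Lφ φ)
    (S : (Fin (q + 1) → EuclideanSpace ℝ (Fin d)) → ℝ) (Sbar LS : ℝ)
    (hScont : Continuous S) (hSbdd : ∀ y, |S y| ≤ Sbar)
    (hSlip : ∀ y z, |S y - S z| ≤ LS * ∑ i, ‖y i - z i‖)
    (hSskew : ∃ i j : Fin (q + 1), i ≠ j ∧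
      ∀ y : Fin (q + 1) → EuclideanSpace ℝ (Fin d),
        S y = - S (fun m => y (Equiv.swap i j m)))
    (k : ℕ) (hk : Sbar * T ≤ 2 ^ k)
    (μ : ℝ → SignedMeasure (EuclideanSpace ℝ (Fin d)))
    (hscheme : IsScheme φ S T k μ)
    (hinit_pos : ∀ A, MeasurableSet A → 0 ≤ μ 0 A)
    (hinit_mass : μ 0 Set.univ = 1) :
    ∀ t ∈ Set.Icc (0 : ℝ) T,
      (∀ A, MeasurableSet A → 0 ≤ μ t A) ∧ μ t Set.univ = 1 := by
  intro t ht
  have hSbar0 : 0 ≤ Sbar := le_trans (abs_nonneg _) (hSbdd fun _ => 0)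
  have h2k : (0:ℝ) < 2 ^ k := by positivity
  have hΔ : 0 < T / 2 ^ k := div_pos hT h2k
  have hΔS : T / 2 ^ k * Sbar ≤ 1 := by
    rw [div_mul_eq_mul_div, div_le_one h2k, mul_comm]
    exact hk
  have key : ∀ n : ℕ, n ≤ 2 ^ k → ∀ s : ℝ, 0 ≤ s → s ≤ (n : ℝ) * (T / 2 ^ k) →
      IsProb (μ s) := by
    intro n
    induction n with
    | zero =>
      intro _ s hs0 hs1
      have hs : s = 0 := le_antisymm (by simpa using hs1) hs0
      rw [hs]
      exact ⟨hinit_pos, hinit_mass⟩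
    | succ n ih =>
      intro hn1 s hs0 hs1
      by_cases hle : s ≤ (n : ℝ) * (T / 2 ^ k)
      · exact ih (le_of_lt (Nat.lt_of_succ_le hn1)) s hs0 hle
      push_neg at hle
      have hnlt : n < 2 ^ k := Nat.lt_of_succ_le hn1
      obtain ⟨⟨H, hH, hsrcdyn⟩, ⟨Φ, hΦ0, hΦd, hΦm, htrans⟩⟩ := hscheme n hnlt
      have hμn : IsProb (μ ((n : ℝ) * (T / 2 ^ k))) :=
        ih (le_of_lt hnlt) _ (mul_nonneg (Nat.cast_nonneg n) (le_of_lt hΔ)) le_rfl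
      have hsrcstep : ∀ u ∈ Set.Ioc ((n : ℝ) * (T / 2 ^ k)) (((n : ℝ) + 1/2) * (T / 2 ^ k)),
          IsProb (μ u) := by
        intro u hu
        rw [hsrcdyn u hu]
        refine source_step hScont hSbdd hSskew hμn hH ?_ ?_
        · linarith [hu.1]
        · have hcle : 2 * (u - (n : ℝ) * (T / 2 ^ k)) ≤ T / 2 ^ k := by
            nlinarith [hu.2]
          nlinarith [mul_le_mul_of_nonneg_right hcle hSbar0]
      by_cases hhalf : s ≤ ((n : ℝ) + 1/2) * (T / 2 ^ k)
      · exact hsrcstep s ⟨hle, hhalf⟩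
      · push_neg at hhalf
        have hμh : IsProb (μ (((n : ℝ) + 1/2) * (T / 2 ^ k))) := by
          refine hsrcstep _ ⟨?_, le_rfl⟩
          nlinarith
        have hs2 : s ∈ Set.Ioc (((n : ℝ) + 1/2) * (T / 2 ^ k)) (((n : ℝ) + 1) * (T / 2 ^ k)) := by
          refine ⟨hhalf, ?_⟩
          push_cast at hs1
          linarith
        rw [htrans s hs2]
        exact map_step hμh (hΦm _)
  have hend : t ≤ ((2 ^ k : ℕ) : ℝ) * (T / 2 ^ k) := by
    have hTeq : ((2 ^ k : ℕ) : ℝ) * (T / 2 ^ k) = T := by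
      push_cast
      field_simp
    rw [hTeq]
    exact ht.2
  exact key (2 ^ k) le_rfl t ht.1 hend
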